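/- Let ξ be a primitive N-th root of unity in ℂ and let ∂_i denote the i-th face maps of a simplicial complex, satisfying the simplicial identity ∂_i ∂_j = ∂_{j-1} ∂_i for i < j. Define the Mayer differential d = Σ_{i=0}^{n} ξ^i ∂_i on n-chains. Then for r ≤ n, d^r = (∏_{k=1}^{r} (1 + ξ + ... + ξ^{k-1})) · Σ_{j₁ < ... < j_r} ξ^{j₁ + ... + j_r - r(r-1)/2} ∂_{j₁} ⋯ ∂_{j_r}. -/

import Mathlib

lemma nth_eq_self {p : ℕ → Prop} [DecidablePred p] {i : ℕ} (hp : ∀ k ≤ i, p k) :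
    Nat.nth p i = i := by
  have hc : Nat.count p i = i := by
    rw [Nat.count_eq_card_filter_range, Finset.filter_true_of_mem, Finset.card_range]
    exact fun x hx => hp x (le_of_lt (Finset.mem_range.mp hx))
  have := Nat.nth_count (hp i le_rfl)
  rwa [hc] at this

lemma nth_shift {p q : ℕ → Prop} [DecidablePred p] [DecidablePred q] {a : ℕ}
    (hq : ∀ x, q x ↔ p x ∧ x ≠ a) (hpa : p a) (hbelow : ∀ k < a, p k)
    (hinf : (setOf p).Infinite) {i : ℕ} (hi : a ≤ i) :
    Nat.nth q i = Nat.nth p (i + 1) := by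
  set e := Nat.nth p (i + 1) with he
  have hpe : p e := Nat.nth_mem_of_infinite hinf _
  have hce : Nat.count p e = i + 1 := Nat.count_nth_of_infinite hinf _
  have hca : Nat.count p a = a := by
    rw [Nat.count_eq_card_filter_range, Finset.filter_true_of_mem, Finset.card_range]
    exact fun x hx => hbelow x (Finset.mem_range.mp hx)
  have hae : a < e := by
    by_contra hle
    push_neg at hle
    have := Nat.count_monotone p hle
    omega
  have hqe : q e := (hq e).mpr ⟨hpe, by omega⟩
  have hfilter : (Finset.range e).filter q = ((Finset.range e).filter p).erase a := by
    ext x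
    simp only [Finset.mem_erase, Finset.mem_filter, Finset.mem_range, hq x]
    tauto
  have hamem : a ∈ (Finset.range e).filter p :=
    Finset.mem_filter.mpr ⟨Finset.mem_range.mpr hae, hpa⟩
  have hcq : Nat.count q e = i := by
    rw [Nat.count_eq_card_filter_range, hfilter, Finset.card_erase_of_mem hamem,
      ← Nat.count_eq_card_filter_range, hce]
    omega
  have := Nat.nth_count hqe
  rwa [hcq] at this

lemma list_notMem_infinite (l : List ℕ) : {x : ℕ | x ∉ l}.Infinite := by
  have := (l.finite_toSet).infinite_compl
  convert this using 1
  rfl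

lemma faceA {V : Type*} [AddCommGroup V] [Module ℂ V] (face : ℕ → Module.End ℂ V)
    (hface : ∀ i j : ℕ, i < j → face i * face j = face (j - 1) * face i) :
    ∀ (l : List ℕ), l.Pairwise (· < ·) → ∀ i : ℕ,
      face i * (l.map face).prod =
        ((List.orderedInsert (· ≤ ·) (Nat.nth (· ∉ l) i) l).map face).prod := by
  intro l
  induction l with
  | nil =>
    intro _ i
    have : Nat.nth (· ∉ ([] : List ℕ)) i = i :=
      nth_eq_self (fun k _ => List.not_mem_nil)
    simp [List.orderedInsert, this]
  | cons j t IH =>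
    intro hl i
    rw [List.pairwise_cons] at hl
    obtain ⟨hjt, hts⟩ := hl
    by_cases hij : i < j
    · have he : Nat.nth (· ∉ (j :: t)) i = i := by
        refine nth_eq_self (fun k hk => ?_)
        simp only [List.mem_cons, not_or]
        exact ⟨by omega, fun hkt => by have := hjt k hkt; omega⟩
      rw [he]
      have : List.orderedInsert (· ≤ ·) i (j :: t) = i :: j :: t := by
        simp [List.orderedInsert, if_pos (le_of_lt hij)]
      rw [this]
      simp [mul_assoc]
    · push_neg at hij
      have hjnott : j ∉ t := fun h => lt_irrefl j (hjt j h)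
      have hinf : (setOf (· ∉ t)).Infinite := list_notMem_infinite t
      have hshift : Nat.nth (· ∉ (j :: t)) i = Nat.nth (· ∉ t) (i + 1) := by
        refine nth_shift (p := (· ∉ t)) (q := (· ∉ (j :: t))) (a := j)
          (fun x => by simp only [List.mem_cons, not_or]; tauto) hjnott
          (fun k hk hkt => by have := hjt k hkt; omega) hinf hij
      rw [hshift]
      set e := Nat.nth (· ∉ t) (i + 1) with hedef
      have hei : i + 1 ≤ e := Nat.le_nth (fun hf => absurd hf hinf)
      have horder : List.orderedInsert (· ≤ ·) e (j :: t) =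
          j :: List.orderedInsert (· ≤ ·) e t := by
        simp [List.orderedInsert, if_neg (show ¬ (e ≤ j) by omega)]
      rw [horder]
      have hcomm : face i * face j = face j * face (i + 1) := by
        have := hface j (i + 1) (by omega)
        simpa using this.symm
      simp only [List.map_cons, List.prod_cons, ← mul_assoc, hcomm]
      rw [mul_assoc, IH hts (i + 1)]

lemma sort_insert_eq (s : Finset ℕ) {e : ℕ} (he : e ∉ s) :
    (insert e s).sort (· ≤ ·) = List.orderedInsert (· ≤ ·) e (s.sort (· ≤ ·)) := by
  refine List.Perm.eq_of_pairwise' (Finset.pairwise_sort _ _)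
    ((Finset.pairwise_sort s (· ≤ ·)).orderedInsert e _) ?_
  exact (Finset.sort_perm_toList _ _).trans ((Finset.toList_insert he).trans
    (((Finset.sort_perm_toList _ _).symm.cons e).trans (List.perm_orderedInsert _ _ _).symm))

lemma set_notMem_infinite (s : Finset ℕ) : {x : ℕ | x ∉ s}.Infinite := by
  have := s.finite_toSet.infinite_compl
  convert this using 1
  rfl

lemma faceAB {V : Type*} [AddCommGroup V] [Module ℂ V] (face : ℕ → Module.End ℂ V)
    (hface : ∀ i j : ℕ, i < j → face i * face j = face (j - 1) * face i)
    (s : Finset ℕ) (i : ℕ) :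
    face i * ((s.sort (· ≤ ·)).map face).prod =
      (((insert (Nat.nth (· ∉ s) i) s).sort (· ≤ ·)).map face).prod := by
  have hpred : (fun x => x ∉ s.sort (· ≤ ·)) = (fun x => x ∉ s) := by
    funext x
    simp [Finset.mem_sort]
  have hsorted : (s.sort (· ≤ ·)).Pairwise (· < ·) := (Finset.sortedLT_sort s).pairwise
  have := faceA face hface (s.sort (· ≤ ·)) hsorted i
  rw [hpred] at this
  rw [this, ← sort_insert_eq s (Nat.nth_mem_of_infinite (set_notMem_infinite s) i)]

lemma sum_rank (s : Finset ℕ) (g : ℕ → ℂ) :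
    ∑ e ∈ s, g ((s.filter (· < e)).card) = ∑ k ∈ Finset.range s.card, g k := by
  have hmono : ∀ a ∈ s, ∀ b, a < b →
      (s.filter (· < a)).card < (s.filter (· < b)).card := by
    intro a ha b hab
    refine Finset.card_lt_card ⟨?_, fun hsub => ?_⟩
    · intro x hx
      rw [Finset.mem_filter] at hx ⊢
      exact ⟨hx.1, by omega⟩
    · have : a ∈ s.filter (· < b) := Finset.mem_filter.mpr ⟨ha, hab⟩
      have := Finset.mem_filter.mp (hsub this)
      omega
  have hmaps : ∀ e, e ∈ s → (s.filter (· < e)).card ∈ Finset.range s.card := by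
    intro e he
    rw [Finset.mem_range]
    refine Finset.card_lt_card ⟨Finset.filter_subset _ _, fun hsub => ?_⟩
    have := Finset.mem_filter.mp (hsub he)
    omega
  have hinj : ∀ a₁, a₁ ∈ s → ∀ a₂, a₂ ∈ s →
      (s.filter (· < a₁)).card = (s.filter (· < a₂)).card → a₁ = a₂ := by
    intro a₁ h₁ a₂ h₂ h
    rcases lt_trichotomy a₁ a₂ with hlt | heq | hgt
    · have := hmono a₁ h₁ a₂ hlt; omega
    · exact heq
    · have := hmono a₂ h₂ a₁ hgt; omega
  refine Finset.sum_bij (fun e _ => (s.filter (· < e)).card) hmaps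
    (fun a₁ h₁ a₂ h₂ h => hinj a₁ h₁ a₂ h₂ h) ?_ (fun a _ => rfl)
  · intro b hb
    obtain ⟨a, ha, hab⟩ := Finset.surj_on_of_inj_on_of_card_le (fun e _ => (s.filter (· < e)).card)
      hmaps (fun a₁ a₂ h₁ h₂ h => hinj a₁ h₁ a₂ h₂ h) (by simp) b hb
    exact ⟨a, ha, hab.symm⟩

lemma coeff_sum (ξ : ℂ) {r : ℕ} (s' : Finset ℕ) (hcard : s'.card = r + 1) :
    ∑ e ∈ s', ξ ^ (r + (Nat.count (· ∉ s'.erase e) e + ∑ j ∈ s'.erase e, j)) =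
      (∑ t ∈ Finset.range (r + 1), ξ ^ t) * ξ ^ (∑ j ∈ s', j) := by
  have key : ∀ e ∈ s', r + (Nat.count (· ∉ s'.erase e) e + ∑ j ∈ s'.erase e, j) =
      (r - (s'.filter (· < e)).card) + ∑ j ∈ s', j := by
    intro e he
    have hcount : Nat.count (· ∉ s'.erase e) e + (s'.filter (· < e)).card = e := by
      have h1 : (Finset.range e).filter (fun x => ¬ x ∉ s'.erase e) = s'.filter (· < e) := by
        ext x
        simp only [Finset.mem_filter, Finset.mem_range, not_not, Finset.mem_erase]
        constructor
        · rintro ⟨hx, hne, hxs⟩; exact ⟨hxs, hx⟩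
        · rintro ⟨hxs, hx⟩; exact ⟨hx, by omega, hxs⟩
      have h2 := Finset.card_filter_add_card_filter_not
        (s := Finset.range e) (fun x => x ∉ s'.erase e)
      rw [h1, Finset.card_range] at h2
      rw [Nat.count_eq_card_filter_range]
      exact h2
    have hsum : (∑ j ∈ s'.erase e, j) + e = ∑ j ∈ s', j := by
      have := Finset.add_sum_erase s' id he
      simpa [add_comm] using this
    have hrank : (s'.filter (· < e)).card ≤ r := by
      have hsub : s'.filter (· < e) ⊆ s'.erase e := by
        intro x hx
        rw [Finset.mem_filter] at hx
        exact Finset.mem_erase.mpr ⟨by omega, hx.1⟩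
      have := Finset.card_le_card hsub
      rw [Finset.card_erase_of_mem he, hcard] at this
      omega
    omega
  rw [Finset.sum_congr rfl (fun e he => by rw [key e he])]
  have : ∀ e ∈ s', ξ ^ ((r - (s'.filter (· < e)).card) + ∑ j ∈ s', j) =
      ξ ^ (r - (s'.filter (· < e)).card) * ξ ^ (∑ j ∈ s', j) := fun e _ => pow_add ξ _ _
  rw [Finset.sum_congr rfl this, ← Finset.sum_mul]
  congr 1
  rw [sum_rank s' (fun k => ξ ^ (r - k)), hcard]
  have := Finset.sum_range_reflect (fun j => ξ ^ j) (r + 1)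
  simpa using this

open Finset in
lemma step_lemma {V : Type*} [AddCommGroup V] [Module ℂ V] (ξ : ℂ)
    (face : ℕ → Module.End ℂ V)
    (hface : ∀ i j : ℕ, i < j → face i * face j = face (j - 1) * face i)
    (n r : ℕ) (hr : r ≤ n) :
    ξ ^ r • ((∑ i ∈ range (n - r + 1), ξ ^ i • face i) *
        ∑ s ∈ powersetCard r (range (n + 1)),
          ξ ^ (∑ j ∈ s, j) • ((s.sort (· ≤ ·)).map face).prod) =
      (∑ t ∈ range (r + 1), ξ ^ t) •
        ∑ s ∈ powersetCard (r + 1) (range (n + 1)),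
          ξ ^ (∑ j ∈ s, j) • ((s.sort (· ≤ ·)).map face).prod := by
  have hbij :
      (∑ p ∈ (range (n - r + 1)) ×ˢ powersetCard r (range (n + 1)),
        ξ ^ (p.1 + ∑ j ∈ p.2, j) •
          (((insert (Nat.nth (· ∉ p.2) p.1) p.2).sort (· ≤ ·)).map face).prod) =
      ∑ q ∈ (powersetCard (r + 1) (range (n + 1))).sigma (fun s' => s'),
        ξ ^ (Nat.count (· ∉ q.1.erase q.2) q.2 + ∑ j ∈ q.1.erase q.2, j) •
          ((q.1.sort (· ≤ ·)).map face).prod := by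
    refine Finset.sum_nbij'
      (fun p => (⟨insert (Nat.nth (· ∉ p.2) p.1) p.2, Nat.nth (· ∉ p.2) p.1⟩ : Σ _ : Finset ℕ, ℕ))
      (fun q => (Nat.count (· ∉ q.1.erase q.2) q.2, q.1.erase q.2)) ?_ ?_ ?_ ?_ ?_
    · rintro ⟨i, s⟩ hp
      dsimp only at hp ⊢
      rw [Finset.mem_product, Finset.mem_range, Finset.mem_powersetCard] at hp
      obtain ⟨hi, hs, hcard⟩ := hp
      set e := Nat.nth (· ∉ s) i with hedef
      have hinf := set_notMem_infinite s
      have hes : e ∉ s := Nat.nth_mem_of_infinite hinf i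
      have hcount : Nat.count (· ∉ s) e = i := Nat.count_nth_of_infinite hinf i
      have hen : e ≤ n := by
        have hsplit := Finset.card_filter_add_card_filter_not
          (s := range e) (fun x => x ∉ s)
        have hsub : (range e).filter (fun x => ¬ x ∉ s) ⊆ s := by
          intro x hx
          rw [Finset.mem_filter, not_not] at hx
          exact hx.2
        have h2 := Finset.card_le_card hsub
        rw [Nat.count_eq_card_filter_range] at hcount
        rw [Finset.card_range] at hsplit
        have hcard' : s.card = r := hcard
        omega
      rw [Finset.mem_sigma]
      constructor
      · rw [Finset.mem_powersetCard]
        exact ⟨Finset.insert_subset (Finset.mem_range.mpr (by omega)) hs,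
          by rw [Finset.card_insert_of_notMem hes, hcard]⟩
      · exact Finset.mem_insert_self _ _
    · rintro ⟨s', e⟩ hq
      dsimp only at hq ⊢
      rw [Finset.mem_sigma, Finset.mem_powersetCard] at hq
      obtain ⟨⟨hs', hcard⟩, he⟩ := hq
      have hcard' : s'.card = r + 1 := hcard
      have hen : e ≤ n := by
        have : e ∈ range (n + 1) := hs' he
        rw [Finset.mem_range] at this
        omega
      rw [Finset.mem_product, Finset.mem_range, Finset.mem_powersetCard]
      refine ⟨?_, fun x hx => hs' (Finset.erase_subset _ _ hx),
        by rw [Finset.card_erase_of_mem he, hcard]; omega⟩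
      -- count bound
      have hsub : (range e).filter (fun x => x ∉ s'.erase e) ⊆
          ((range (n + 1)).filter (fun x => x ∉ s'.erase e)).erase e := by
        intro x hx
        rw [Finset.mem_filter, Finset.mem_range] at hx
        rw [Finset.mem_erase, Finset.mem_filter, Finset.mem_range]
        exact ⟨by omega, by omega, hx.2⟩
      have hememb : e ∈ (range (n + 1)).filter (fun x => x ∉ s'.erase e) :=
        Finset.mem_filter.mpr ⟨Finset.mem_range.mpr (by omega), Finset.notMem_erase e s'⟩
      have hfcard : ((range (n + 1)).filter (fun x => ¬ x ∉ s'.erase e)).card = r := by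
        have : (range (n + 1)).filter (fun x => ¬ x ∉ s'.erase e) = s'.erase e := by
          ext x
          rw [Finset.mem_filter, not_not, Finset.mem_range]
          constructor
          · exact fun h => h.2
          · intro h
            have := hs' (Finset.erase_subset _ _ h)
            rw [Finset.mem_range] at this
            exact ⟨this, h⟩
        rw [this, Finset.card_erase_of_mem he, hcard]; omega
      have hsplit := Finset.card_filter_add_card_filter_not
        (s := range (n + 1)) (fun x => x ∉ s'.erase e)
      rw [Finset.card_range, hfcard] at hsplit
      have h1 := Finset.card_le_card hsub
      have h2 := Finset.card_erase_of_mem hememb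
      rw [Nat.count_eq_card_filter_range]
      omega
    · rintro ⟨i, s⟩ hp
      dsimp only at hp ⊢
      rw [Finset.mem_product, Finset.mem_range, Finset.mem_powersetCard] at hp
      obtain ⟨hi, hs, hcard⟩ := hp
      have hinf := set_notMem_infinite s
      have hes : Nat.nth (· ∉ s) i ∉ s := Nat.nth_mem_of_infinite hinf i
      simp only [Finset.erase_insert hes]
      rw [Nat.count_nth_of_infinite hinf i]
    · rintro ⟨s', e⟩ hq
      dsimp only at hq ⊢
      rw [Finset.mem_sigma] at hq
      obtain ⟨_, he⟩ := hq
      have hee : e ∉ s'.erase e := Finset.notMem_erase e s'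
      have h2 : Nat.nth (· ∉ s'.erase e) (Nat.count (· ∉ s'.erase e) e) = e :=
        Nat.nth_count hee
      simp only [h2, Finset.insert_erase he]
    · rintro ⟨i, s⟩ hp
      dsimp only at hp ⊢
      rw [Finset.mem_product, Finset.mem_range, Finset.mem_powersetCard] at hp
      obtain ⟨hi, hs, hcard⟩ := hp
      have hinf := set_notMem_infinite s
      have hes : Nat.nth (· ∉ s) i ∉ s := Nat.nth_mem_of_infinite hinf i
      simp only [Finset.erase_insert hes, Nat.count_nth_of_infinite hinf i]
  -- now assemble
  rw [Finset.sum_mul_sum]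
  have hsummand : ∀ i ∈ range (n - r + 1), ∀ s ∈ powersetCard r (range (n + 1)),
      (ξ ^ i • face i) * (ξ ^ (∑ j ∈ s, j) • ((s.sort (· ≤ ·)).map face).prod) =
        ξ ^ (i + ∑ j ∈ s, j) •
          (((insert (Nat.nth (· ∉ s) i) s).sort (· ≤ ·)).map face).prod := by
    intro i _ s _
    rw [smul_mul_smul_comm, ← pow_add, faceAB face hface s i]
  rw [Finset.sum_congr rfl (fun i hi => Finset.sum_congr rfl (fun s hs => hsummand i hi s hs))]
  rw [← Finset.sum_product']
  rw [show (∑ p ∈ (range (n - r + 1)) ×ˢ powersetCard r (range (n + 1)),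
      ξ ^ (p.1 + ∑ j ∈ p.2, j) •
        (((insert (Nat.nth (· ∉ p.2) p.1) p.2).sort (· ≤ ·)).map face).prod) =
      _ from hbij]
  rw [Finset.sum_sigma]
  rw [Finset.smul_sum, Finset.smul_sum]
  refine Finset.sum_congr rfl (fun s' hs' => ?_)
  rw [Finset.mem_powersetCard] at hs'
  rw [Finset.smul_sum]
  have : ∀ e ∈ s', ξ ^ r • (ξ ^ (Nat.count (· ∉ s'.erase e) e + ∑ j ∈ s'.erase e, j) •
      ((s'.sort (· ≤ ·)).map face).prod) =
      ξ ^ (r + (Nat.count (· ∉ s'.erase e) e + ∑ j ∈ s'.erase e, j)) •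
        ((s'.sort (· ≤ ·)).map face).prod := by
    intro e _
    rw [smul_smul, ← pow_add]
  rw [Finset.sum_congr rfl this, ← Finset.sum_smul, coeff_sum ξ s' hs'.2, mul_smul]


lemma minsum : ∀ (m : ℕ) (s : Finset ℕ), s.card = m → ∑ k ∈ Finset.range m, k ≤ ∑ j ∈ s, j := by
  intro m
  induction m with
  | zero => intro s _; simp
  | succ m IH =>
    intro s hcard
    have hne : s.Nonempty := Finset.card_pos.mp (by omega)
    set M := s.max' hne with hM
    have hMmem : M ∈ s := s.max'_mem hne
    have hsub : s ⊆ Finset.range (M + 1) := by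
      intro x hx
      rw [Finset.mem_range]
      have := Finset.le_max' s x hx
      omega
    have hMn : m ≤ M := by
      have := Finset.card_le_card hsub
      rw [Finset.card_range] at this
      omega
    have hesum := Finset.add_sum_erase s id hMmem
    have hecard : (s.erase M).card = m := by
      rw [Finset.card_erase_of_mem hMmem, hcard]; omega
    have hIH := IH (s.erase M) hecard
    rw [Finset.sum_range_succ]
    simp only [id] at hesum hIH
    omega

open Finset in
lemma aux_lemma {V : Type*} [AddCommGroup V] [Module ℂ V] (ξ : ℂ)
    (face : ℕ → Module.End ℂ V)
    (hface : ∀ i j : ℕ, i < j → face i * face j = face (j - 1) * face i)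
    (D : ℕ → Module.End ℂ V)
    (hD : ∀ m : ℕ, D m = ∑ i ∈ Finset.range (m + 1), ξ ^ i • face i)
    (n : ℕ) :
    ∀ r, r ≤ n →
      ξ ^ (∑ k ∈ range r, k) • ((List.range r).map (fun t => D (n - r + 1 + t))).prod =
        (∏ k ∈ range r, ∑ i ∈ range (k + 1), ξ ^ i) •
          ∑ s ∈ powersetCard r (range (n + 1)),
            ξ ^ (∑ j ∈ s, j) • ((s.sort (· ≤ ·)).map face).prod := by
  intro r
  induction r with
  | zero =>
    intro _
    simp [Finset.powersetCard_zero]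
  | succ r IH =>
    intro h
    have hr : r ≤ n := by omega
    have hlist : ((List.range (r + 1)).map (fun t => D (n - (r + 1) + 1 + t))).prod =
        D (n - r) * ((List.range r).map (fun t => D (n - r + 1 + t))).prod := by
      rw [List.range_succ_eq_map, List.map_cons, List.prod_cons, List.map_map]
      congr 1
      · congr 1
        omega
      · congr 1
        refine List.map_congr_left (fun t _ => ?_)
        simp only [Function.comp]
        congr 1
        omega
    rw [hlist, Finset.sum_range_succ, pow_add, Finset.prod_range_succ]
    rw [mul_comm (ξ ^ (∑ k ∈ range r, k)) (ξ ^ r), mul_smul]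
    rw [← mul_smul_comm, IH hr, mul_smul_comm, smul_comm]
    rw [hD (n - r), step_lemma ξ face hface n r hr, smul_smul]


/-- For face operators `face i` satisfying the simplicial identity
`face i ∘ face j = face (j-1) ∘ face i` for `i < j`, and the Mayer differential
`D m = ∑_{i=0}^{m} ξ^i face i` on `m`-chains (`ξ = e^{2πi/N}`), the `r`-fold composite
`d^r = D (n-r+1) ∘ ⋯ ∘ D n` on `n`-chains (with `r ≤ n`) equals
`(∏_{k=1}^{r} (1+ξ+⋯+ξ^{k-1})) · ∑_{j₁<⋯<j_r ≤ n} ξ^{j₁+⋯+j_r - r(r-1)/2} face_{j₁}⋯face_{j_r}`. -/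
theorem mayer_differential_power_formula
    (N : ℕ) (hN : 2 ≤ N) (ξ : ℂ) (hξ : ξ = Complex.exp (2 * Real.pi * Complex.I / N))
    {V : Type*} [AddCommGroup V] [Module ℂ V]
    (face : ℕ → Module.End ℂ V)
    (hface : ∀ i j : ℕ, i < j → face i * face j = face (j - 1) * face i)
    (D : ℕ → Module.End ℂ V)
    (hD : ∀ m : ℕ, D m = ∑ i ∈ Finset.range (m + 1), ξ ^ i • face i)
    (n r : ℕ) (hr : r ≤ n) :
    ((List.range r).map (fun t => D (n - r + 1 + t))).prod =
      (∏ k ∈ Finset.range r, ∑ i ∈ Finset.range (k + 1), ξ ^ i) •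
        ∑ s ∈ Finset.powersetCard r (Finset.range (n + 1)),
          ξ ^ ((∑ j ∈ s, j) - r * (r - 1) / 2) • ((s.sort (· ≤ ·)).map face).prod := by
  have hxne : ξ ≠ 0 := by rw [hξ]; exact Complex.exp_ne_zero _
  have T2 := Finset.sum_range_id_mul_two r
  have hTdiv : r * (r - 1) / 2 = ∑ k ∈ Finset.range r, k := by omega
  set T := ∑ k ∈ Finset.range r, k with hT
  have haux := aux_lemma ξ face hface D hD n r hr
  have hR : ξ ^ T • ((∏ k ∈ Finset.range r, ∑ i ∈ Finset.range (k + 1), ξ ^ i) •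
      ∑ s ∈ Finset.powersetCard r (Finset.range (n + 1)),
        ξ ^ ((∑ j ∈ s, j) - T) • ((s.sort (· ≤ ·)).map face).prod) =
      (∏ k ∈ Finset.range r, ∑ i ∈ Finset.range (k + 1), ξ ^ i) •
      ∑ s ∈ Finset.powersetCard r (Finset.range (n + 1)),
        ξ ^ (∑ j ∈ s, j) • ((s.sort (· ≤ ·)).map face).prod := by
    rw [smul_comm]
    congr 1
    rw [Finset.smul_sum]
    refine Finset.sum_congr rfl (fun s hs => ?_)
    rw [Finset.mem_powersetCard] at hs
    have hmin : T ≤ ∑ j ∈ s, j := minsum r s hs.2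
    rw [smul_smul, ← pow_add]
    have harith : T + ((∑ j ∈ s, j) - T) = ∑ j ∈ s, j := by omega
    rw [harith]
  have hkey := haux.trans hR.symm
  have h2 := congrArg (fun x => (ξ ^ T)⁻¹ • x) hkey
  simp only [smul_smul, ← mul_assoc, inv_mul_cancel₀ (pow_ne_zero T hxne), one_mul, one_smul] at h2
  simp only [← hT, inv_mul_cancel₀ (pow_ne_zero T hxne), one_smul] at h2
  rw [hTdiv]
  exact h2
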